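/- Let d ≥ 1 and p > d be real. There exists a constant C > 0, depending only on d and p, such that for all r > 0 and all ℓ ∈ ℤ^d with |ℓ| ≥ 2r, one has ∑_{k ∈ ℤ^d} (1 + |k|)^{-d} (1 + |ℓ − k|)^{-p} ≤ C (1 + r)^{-d}. -/

import Mathlib

/-- The Euclidean norm of a lattice point `ℓ ∈ ℤ^d`. -/
noncomputable def znorm {d : ℕ} (ℓ : Fin d → ℤ) : ℝ :=
  Real.sqrt (∑ i, ((ℓ i : ℝ)) ^ 2)

lemma znorm_nonneg {d : ℕ} (k : Fin d → ℤ) : 0 ≤ znorm k := Real.sqrt_nonneg _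

lemma znorm_eq {d : ℕ} (k : Fin d → ℤ) :
    znorm k = ‖(WithLp.equiv 2 (Fin d → ℝ)).symm (fun i => (k i : ℝ))‖ := by
  rw [EuclideanSpace.norm_eq]
  simp [znorm, sq_abs]

lemma znorm_add_le {d : ℕ} (a b : Fin d → ℤ) : znorm (a + b) ≤ znorm a + znorm b := by
  rw [znorm_eq, znorm_eq, znorm_eq]
  have h : (WithLp.equiv 2 (Fin d → ℝ)).symm (fun i => ((a + b) i : ℝ))
      = (WithLp.equiv 2 (Fin d → ℝ)).symm (fun i => (a i : ℝ))
        + (WithLp.equiv 2 (Fin d → ℝ)).symm (fun i => (b i : ℝ)) := by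
    apply (WithLp.equiv 2 (Fin d → ℝ)).injective
    rw [Equiv.apply_symm_apply, show ∀ x y : WithLp 2 (Fin d → ℝ), WithLp.equiv 2 _ (x + y) = WithLp.equiv 2 _ x + WithLp.equiv 2 _ y from fun _ _ => rfl, Equiv.apply_symm_apply, Equiv.apply_symm_apply]
    funext i
    simp [Pi.add_apply]
  rw [h]
  exact norm_add_le _ _

lemma znorm_neg {d : ℕ} (a : Fin d → ℤ) : znorm (-a) = znorm a := by
  simp [znorm]

lemma coord_le_znorm {d : ℕ} (k : Fin d → ℤ) (i : Fin d) : |(k i : ℝ)| ≤ znorm k := by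
  rw [← Real.sqrt_sq_eq_abs]
  exact Real.sqrt_le_sqrt
    (Finset.single_le_sum (fun j _ => sq_nonneg ((k j : ℝ))) (Finset.mem_univ i))

lemma one_add_znorm_pos {d : ℕ} (k : Fin d → ℤ) : (0 : ℝ) < 1 + znorm k := by
  linarith [znorm_nonneg k]

lemma rpow_znorm_nonneg {d : ℕ} (k : Fin d → ℤ) (t : ℝ) : 0 ≤ (1 + znorm k) ^ t :=
  Real.rpow_nonneg (one_add_znorm_pos k).le t

lemma summable_int_one_add {t : ℝ} (ht : 1 < t) :
    Summable (fun n : ℤ => (1 + |(n : ℝ)|) ^ (-t)) := by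
  have h0 : Summable (fun n : ℕ => ((n : ℝ)) ^ (-t)) :=
    Real.summable_nat_rpow.mpr (by linarith)
  have h : Summable (fun n : ℕ => (1 + (n : ℝ)) ^ (-t)) := by
    refine ((summable_nat_add_iff (f := fun n : ℕ => ((n : ℝ)) ^ (-t)) 1).mpr h0).congr
      fun n => ?_
    push_cast
    rw [add_comm]
  apply Summable.of_nat_of_neg
  · exact h.congr fun n => by rw [Int.cast_natCast, abs_of_nonneg (Nat.cast_nonneg n)]
  · exact h.congr fun n => by
      rw [Int.cast_neg, abs_neg, Int.cast_natCast, abs_of_nonneg (Nat.cast_nonneg n)]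

lemma summable_prod_one_add {t : ℝ} (ht : 1 < t) (d : ℕ) :
    Summable (fun k : Fin d → ℤ => ∏ i, (1 + |(k i : ℝ)|) ^ (-t)) := by
  induction d with
  | zero => exact Summable.of_finite
  | succ n ih =>
      have h2 := (summable_int_one_add ht).mul_of_nonneg ih
        (fun _ => by positivity) (fun _ => Finset.prod_nonneg fun _ _ => by positivity)
      rw [← Equiv.summable_iff (Fin.consEquiv fun _ : Fin (n + 1) => ℤ)]
      refine h2.congr fun x => ?_
      simp only [Function.comp_apply]
      rw [Fin.prod_univ_succ]
      simp only [Fin.consEquiv_apply, Fin.cons_zero, Fin.cons_succ]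

lemma summable_znorm {d : ℕ} (hd : 1 ≤ d) {s : ℝ} (hs : (d : ℝ) < s) :
    Summable (fun k : Fin d → ℤ => (1 + znorm k) ^ (-s)) := by
  have hd0 : (0 : ℝ) < d := by exact_mod_cast hd
  have ht : 1 < s / d := (one_lt_div hd0).mpr hs
  have hs0 : (0 : ℝ) < s := hd0.trans hs
  refine Summable.of_nonneg_of_le (fun k => rpow_znorm_nonneg k _) (fun k => ?_)
    (summable_prod_one_add ht d)
  have hz : 0 ≤ znorm k := znorm_nonneg k
  have hprod : (∏ i, (1 + |(k i : ℝ)|)) ≤ (1 + znorm k) ^ d := by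
    calc (∏ i, (1 + |(k i : ℝ)|)) ≤ ∏ _i : Fin d, (1 + znorm k) :=
          Finset.prod_le_prod (fun i _ => by positivity)
            (fun i _ => by linarith [coord_le_znorm k i])
      _ = (1 + znorm k) ^ d := by
          rw [Finset.prod_const, Finset.card_univ, Fintype.card_fin]
  have h0 : (0 : ℝ) < ∏ i, (1 + |(k i : ℝ)|) :=
    Finset.prod_pos (fun i _ => by positivity)
  have key : ((1 + znorm k) ^ d : ℝ) ^ (-(s / d)) ≤ (∏ i, (1 + |(k i : ℝ)|)) ^ (-(s / d)) :=
    Real.rpow_le_rpow_of_nonpos h0 hprod (neg_nonpos.mpr (div_nonneg hs0.le hd0.le))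
  have e1 : ((1 + znorm k) ^ d : ℝ) ^ (-(s / d)) = (1 + znorm k) ^ (-s) := by
    rw [← Real.rpow_natCast (1 + znorm k) d, ← Real.rpow_mul (by linarith)]
    congr 1
    field_simp
  have e2 : (∏ i, (1 + |(k i : ℝ)|)) ^ (-(s / d)) = ∏ i, (1 + |(k i : ℝ)|) ^ (-(s / d)) :=
    (Real.finset_prod_rpow _ _ (fun i _ => by positivity) _).symm
  calc (1 + znorm k) ^ (-s) = ((1 + znorm k) ^ d : ℝ) ^ (-(s / d)) := e1.symm
    _ ≤ (∏ i, (1 + |(k i : ℝ)|)) ^ (-(s / d)) := key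
    _ = ∏ i, (1 + |(k i : ℝ)|) ^ (-(s / d)) := e2

/-- **Discrete convolution estimate, case `p > d`**: there is `C > 0`, depending only on `d`
and `p`, such that for all `r > 0` and all `ℓ ∈ ℤ^d` with `|ℓ| ≥ 2r`,
`∑_{k ∈ ℤ^d} (1+|k|)^{-d} (1+|ℓ−k|)^{-p} ≤ C (1+r)^{-d}`. -/
theorem stmt3 (d : ℕ) (hd : 1 ≤ d) (p : ℝ) (hp : (d : ℝ) < p) :
    ∃ C : ℝ, 0 < C ∧ ∀ r : ℝ, 0 < r → ∀ ℓ : Fin d → ℤ, 2 * r ≤ znorm ℓ →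
      (∑' k : Fin d → ℤ, (1 + znorm k) ^ (-(d : ℝ)) * (1 + znorm (ℓ - k)) ^ (-p))
        ≤ C * (1 + r) ^ (-(d : ℝ)) := by
  have hd0 : (0 : ℝ) < d := by exact_mod_cast hd
  set ε : ℝ := (p - d) / 2 with hεdef
  have hε : 0 < ε := by rw [hεdef]; linarith
  set q : ℝ := d + ε with hqdef
  have hq : (d : ℝ) < q := by rw [hqdef]; linarith
  have hSp : Summable (fun k : Fin d → ℤ => (1 + znorm k) ^ (-p)) := summable_znorm hd hp
  have hSq : Summable (fun k : Fin d → ℤ => (1 + znorm k) ^ (-q)) := summable_znorm hd hq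
  set Sp := ∑' k : Fin d → ℤ, (1 + znorm k) ^ (-p) with hSpdef
  set Sq := ∑' k : Fin d → ℤ, (1 + znorm k) ^ (-q) with hSqdef
  have hSp_pos : 0 < Sp := by
    have h1 : (1 : ℝ) = (1 + znorm (0 : Fin d → ℤ)) ^ (-p) := by
      simp [znorm]
    calc (0 : ℝ) < 1 := one_pos
      _ = (1 + znorm (0 : Fin d → ℤ)) ^ (-p) := h1
      _ ≤ Sp := Summable.le_tsum hSp 0 (fun k _ => rpow_znorm_nonneg k _)
  have hSq_nonneg : 0 ≤ Sq := tsum_nonneg (fun k => rpow_znorm_nonneg k _)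
  have h2ε : (0 : ℝ) ≤ 2 ^ ε := Real.rpow_nonneg (by norm_num) ε
  have hC_pos : 0 < Sp + 2 ^ ε * Sq :=
    add_pos_of_pos_of_nonneg hSp_pos (mul_nonneg h2ε hSq_nonneg)
  refine ⟨Sp + 2 ^ ε * Sq, hC_pos, ?_⟩
  intro r hr ℓ hℓ
  set L := znorm ℓ with hLdef
  have hL0 : 0 ≤ L := znorm_nonneg ℓ
  set M : ℝ := 1 + L / 2 with hMdef
  have hM0 : (0 : ℝ) < M := by rw [hMdef]; linarith
  have hrM : 1 + r ≤ M := by rw [hMdef]; linarith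
  have hdneg : -(d : ℝ) ≤ 0 := neg_nonpos.mpr (Nat.cast_nonneg d)
  -- triangle inequalities
  have tri : ∀ k : Fin d → ℤ, L ≤ znorm k + znorm (ℓ - k) := by
    intro k
    have h := znorm_add_le k (ℓ - k)
    rw [add_sub_cancel] at h
    exact h
  have tri2 : ∀ k : Fin d → ℤ, znorm k ≤ L + znorm (ℓ - k) := by
    intro k
    have h := znorm_add_le ℓ (-(ℓ - k))
    rw [znorm_neg] at h
    have h2 : ℓ + -(ℓ - k) = k := by abel
    rw [h2] at h
    exact h
  -- pointwise bound
  have key : ∀ k : Fin d → ℤ,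
      (1 + znorm k) ^ (-(d : ℝ)) * (1 + znorm (ℓ - k)) ^ (-p)
        ≤ M ^ (-(d : ℝ)) * ((1 + znorm (ℓ - k)) ^ (-p) + 2 ^ ε * (1 + znorm k) ^ (-q)) := by
    intro k
    set A : ℝ := 1 + znorm k with hAdef
    set B : ℝ := 1 + znorm (ℓ - k) with hBdef
    have hzk : 0 ≤ znorm k := znorm_nonneg k
    have hzlk : 0 ≤ znorm (ℓ - k) := znorm_nonneg (ℓ - k)
    have hA0 : (0 : ℝ) < A := by rw [hAdef]; linarith
    have hB0 : (0 : ℝ) < B := by rw [hBdef]; linarith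
    rcases le_or_gt M A with hcase | hcase
    · have h1 : A ^ (-(d : ℝ)) ≤ M ^ (-(d : ℝ)) :=
        Real.rpow_le_rpow_of_nonpos hM0 hcase hdneg
      have h2ε : (0 : ℝ) ≤ 2 ^ ε := Real.rpow_nonneg (by norm_num) ε
      calc A ^ (-(d : ℝ)) * B ^ (-p) ≤ M ^ (-(d : ℝ)) * B ^ (-p) :=
            mul_le_mul_of_nonneg_right h1 (Real.rpow_nonneg hB0.le _)
        _ ≤ M ^ (-(d : ℝ)) * (B ^ (-p) + 2 ^ ε * A ^ (-q)) :=
            mul_le_mul_of_nonneg_left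
              (le_add_of_nonneg_right (mul_nonneg h2ε (Real.rpow_nonneg hA0.le _)))
              (Real.rpow_nonneg hM0.le _)
    · have hMB : M ≤ B := by
        have h := tri k
        rw [hBdef, hMdef]
        rw [hAdef, hMdef] at hcase
        linarith
      have f1 : B ^ (-p) = B ^ (-(p - ε)) * B ^ (-ε) := by
        rw [← Real.rpow_add hB0]
        congr 1
        ring
      have f2 : B ^ (-(p - ε)) ≤ M ^ (-(p - ε)) := by
        apply Real.rpow_le_rpow_of_nonpos hM0 hMB
        rw [hεdef]
        linarith
      have hAB : A ≤ (1 + L) * B := by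
        have h := tri2 k
        rw [hAdef, hBdef]
        nlinarith
      have h1L : (0 : ℝ) < 1 + L := by linarith
      have f3 : B ^ (-ε) ≤ (A / (1 + L)) ^ (-ε) := by
        apply Real.rpow_le_rpow_of_nonpos (div_pos hA0 h1L) _ (by linarith)
        rw [div_le_iff₀ (by positivity)]
        calc A ≤ (1 + L) * B := hAB
          _ = B * (1 + L) := mul_comm _ _
      have f4 : (A / (1 + L)) ^ (-ε) = A ^ (-ε) * (1 + L) ^ ε := by
        rw [Real.div_rpow hA0.le h1L.le,
          Real.rpow_neg h1L.le, div_eq_mul_inv, inv_inv]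
      have f5 : (1 + L) ^ ε ≤ 2 ^ ε * M ^ ε := by
        rw [← Real.mul_rpow (by norm_num) hM0.le]
        apply Real.rpow_le_rpow (by linarith) _ hε.le
        rw [hMdef]
        linarith
      have g1 : B ^ (-ε) ≤ A ^ (-ε) * (2 ^ ε * M ^ ε) := by
        calc B ^ (-ε) ≤ A ^ (-ε) * (1 + L) ^ ε := f3.trans_eq f4
          _ ≤ A ^ (-ε) * (2 ^ ε * M ^ ε) :=
            mul_le_mul_of_nonneg_left f5 (Real.rpow_nonneg hA0.le _)
      have main : A ^ (-(d : ℝ)) * B ^ (-p)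
          ≤ A ^ (-(d : ℝ)) * (M ^ (-(p - ε)) * (A ^ (-ε) * (2 ^ ε * M ^ ε))) := by
        rw [f1]
        apply mul_le_mul_of_nonneg_left _ (Real.rpow_nonneg hA0.le _)
        exact mul_le_mul f2 g1 (Real.rpow_nonneg hB0.le _) (Real.rpow_nonneg hM0.le _)
      have e1 : M ^ (-(p - ε)) * M ^ ε = M ^ (-(d : ℝ)) := by
        rw [← Real.rpow_add hM0]
        congr 1
        rw [hεdef]
        ring
      have e2 : A ^ (-(d : ℝ)) * A ^ (-ε) = A ^ (-q) := by
        rw [← Real.rpow_add hA0]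
        congr 1
        rw [hqdef]
        ring
      have ident : A ^ (-(d : ℝ)) * (M ^ (-(p - ε)) * (A ^ (-ε) * (2 ^ ε * M ^ ε)))
          = M ^ (-(d : ℝ)) * (2 ^ ε * A ^ (-q)) := by
        calc A ^ (-(d : ℝ)) * (M ^ (-(p - ε)) * (A ^ (-ε) * (2 ^ ε * M ^ ε)))
            = (M ^ (-(p - ε)) * M ^ ε) * ((A ^ (-(d : ℝ)) * A ^ (-ε)) * 2 ^ ε) := by ring
          _ = M ^ (-(d : ℝ)) * (A ^ (-q) * 2 ^ ε) := by rw [e1, e2]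
          _ = M ^ (-(d : ℝ)) * (2 ^ ε * A ^ (-q)) := by ring
      calc A ^ (-(d : ℝ)) * B ^ (-p)
          ≤ M ^ (-(d : ℝ)) * (2 ^ ε * A ^ (-q)) := main.trans_eq ident
        _ ≤ M ^ (-(d : ℝ)) * (B ^ (-p) + 2 ^ ε * A ^ (-q)) :=
          mul_le_mul_of_nonneg_left (le_add_of_nonneg_left (Real.rpow_nonneg hB0.le _))
            (Real.rpow_nonneg hM0.le _)
  -- summability of translated family
  have htrans : Summable (fun k : Fin d → ℤ => (1 + znorm (ℓ - k)) ^ (-p)) := by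
    have h := (Equiv.subLeft ℓ).summable_iff.mpr hSp
    exact h.congr fun k => by simp [Equiv.subLeft_apply]
  have hRHS : Summable (fun k : Fin d → ℤ =>
      M ^ (-(d : ℝ)) * ((1 + znorm (ℓ - k)) ^ (-p) + 2 ^ ε * (1 + znorm k) ^ (-q))) :=
    (htrans.add (hSq.mul_left _)).mul_left _
  have hLHS : Summable (fun k : Fin d → ℤ =>
      (1 + znorm k) ^ (-(d : ℝ)) * (1 + znorm (ℓ - k)) ^ (-p)) :=
    Summable.of_nonneg_of_le
      (fun k => mul_nonneg (rpow_znorm_nonneg k _) (rpow_znorm_nonneg (ℓ - k) _)) key hRHS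
  have step1 := Summable.tsum_le_tsum key hLHS hRHS
  have htsum_trans : ∑' k : Fin d → ℤ, (1 + znorm (ℓ - k)) ^ (-p) = Sp := by
    rw [hSpdef]
    exact (Equiv.subLeft ℓ).tsum_eq (fun k => (1 + znorm k) ^ (-p))
  have step2 : (∑' k : Fin d → ℤ,
      M ^ (-(d : ℝ)) * ((1 + znorm (ℓ - k)) ^ (-p) + 2 ^ ε * (1 + znorm k) ^ (-q)))
      = M ^ (-(d : ℝ)) * (Sp + 2 ^ ε * Sq) := by
    rw [tsum_mul_left, Summable.tsum_add htrans (hSq.mul_left _), tsum_mul_left, htsum_trans, hSqdef]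
  have step3 : M ^ (-(d : ℝ)) ≤ (1 + r) ^ (-(d : ℝ)) :=
    Real.rpow_le_rpow_of_nonpos (by positivity) hrM hdneg
  calc (∑' k : Fin d → ℤ, (1 + znorm k) ^ (-(d : ℝ)) * (1 + znorm (ℓ - k)) ^ (-p))
      ≤ M ^ (-(d : ℝ)) * (Sp + 2 ^ ε * Sq) := step1.trans_eq step2
    _ ≤ (1 + r) ^ (-(d : ℝ)) * (Sp + 2 ^ ε * Sq) :=
      mul_le_mul_of_nonneg_right step3 hC_pos.le
    _ = (Sp + 2 ^ ε * Sq) * (1 + r) ^ (-(d : ℝ)) := mul_comm _ _
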